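/- Let Ω be a domain in ℂ^n containing the origin 0, let t > -n be a real number, and let φ be a plurisubharmonic function on Ω. If ν_φ(0) > 0, then c_t(φ) ≤ (t+n)/ν_φ(0); in particular, for every real c > (t+n)/ν_φ(0) the function ‖z‖^{2t} e^{-2cφ} is not Lebesgue integrable on any neighborhood of 0. -/

import Mathlib

open MeasureTheory Filter Metric Topology Complex
open scoped ENNReal EReal

noncomputable section

/-- `ℂ^n` with its Euclidean (Hermitian) norm. -/
abbrev Cn (n : ℕ) : Type := EuclideanSpace ℂ (Fin n)

/-- Lebesgue measure on `ℂ^n ≅ ℝ^{2n}`. -/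
instance Cn.measureSpace (n : ℕ) : MeasureSpace (Cn n) where
  toMeasurableSpace := WithLp.measurableSpace 2 (Fin n → ℂ)
  volume := Measure.map (WithLp.toLp 2) (volume : Measure (Fin n → ℂ))

/-- Extended-real-valued logarithm, sending `0` (and negative numbers) to `-∞`. -/
def elog (x : ℝ) : EReal := if x ≤ 0 then (⊥ : EReal) else ((Real.log x : ℝ) : EReal)

/-- `exp : EReal → ℝ≥0∞`, with `exp (-∞) = 0` and `exp (+∞) = +∞`. -/
def erealExp (x : EReal) : ℝ≥0∞ :=
  if x = ⊤ then ⊤ else if x = ⊥ then 0 else ENNReal.ofReal (Real.exp x.toReal)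

/-- The positive part of an extended real number, as an element of `ℝ≥0∞`. -/
def erealPosPart (x : EReal) : ℝ≥0∞ := if x = ⊤ then ⊤ else ENNReal.ofReal x.toReal

/-- The integral of an `EReal`-valued function: upper integral of the positive part minus the
upper integral of the negative part. -/
def erealIntegral {α : Type*} [MeasurableSpace α] (μ : Measure α) (f : α → EReal) : EReal :=
  ((∫⁻ a, erealPosPart (f a) ∂μ : ℝ≥0∞) : EReal) -
    ((∫⁻ a, erealPosPart (-(f a)) ∂μ : ℝ≥0∞) : EReal)

/-- A function `f : ℂ → [-∞, ∞)` is subharmonic on an open set `U ⊆ ℂ` if it is upper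
semicontinuous on `U` and satisfies the sub-mean value inequality on circles contained in `U`
(written in the form `2π · f(z) ≤ ∫_0^{2π} f(z + r e^{iθ}) dθ`). -/
def SubhOn (f : ℂ → EReal) (U : Set ℂ) : Prop :=
  UpperSemicontinuousOn f U ∧
  ∀ z ∈ U, ∀ r : ℝ, 0 < r → closedBall z r ⊆ U →
    ((2 * Real.pi : ℝ) : EReal) * f z ≤
      erealIntegral (volume.restrict (Set.Ioc (0:ℝ) (2 * Real.pi)))
        (fun θ : ℝ => f (z + (r : ℂ) * Complex.exp (θ * Complex.I)))

/-- A function `φ : ℂ^n → [-∞, ∞)` is plurisubharmonic on `Ω` if it is upper semicontinuous on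
`Ω`, not identically `-∞`, never `+∞`, and its restriction to every complex line is subharmonic. -/
def PshOn {n : ℕ} (φ : Cn n → EReal) (Ω : Set (Cn n)) : Prop :=
  UpperSemicontinuousOn φ Ω ∧ (∃ z ∈ Ω, φ z ≠ ⊥) ∧ (∀ z ∈ Ω, φ z ≠ ⊤) ∧
  ∀ a v : Cn n, SubhOn (fun w : ℂ => φ (a + w • v)) {w : ℂ | a + w • v ∈ Ω}

/-- A domain in `ℂ^n`: a nonempty connected open set. -/
def IsCnDomain {n : ℕ} (Ω : Set (Cn n)) : Prop := IsOpen Ω ∧ IsConnected Ω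

/-- The Lelong number of `φ` at the origin: `ν_φ(0) = liminf_{z → 0} φ(z) / log ‖z‖`. -/
def lelong {n : ℕ} (φ : Cn n → EReal) : EReal :=
  liminf (fun z : Cn n => φ z * (((Real.log ‖z‖)⁻¹ : ℝ) : EReal)) (𝓝[≠] (0 : Cn n))

/-- The Lelong number at `0` of the restriction of `φ` to the complex line through `0` with
direction `v`: `ν_{φ|_l}(0) = liminf_{λ → 0} φ(λ v) / log |λ|`. -/
def lelongLine {n : ℕ} (φ : Cn n → EReal) (v : Cn n) : EReal :=
  liminf (fun w : ℂ => φ (w • v) * (((Real.log ‖w‖)⁻¹ : ℝ) : EReal)) (𝓝[≠] (0 : ℂ))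

/-- `‖z‖^{2t} e^{-2cφ}` is (Lebesgue) integrable on some neighborhood of the origin. -/
def lctIntegrable {n : ℕ} (t c : ℝ) (φ : Cn n → EReal) : Prop :=
  ∃ U ∈ 𝓝 (0 : Cn n),
    (∫⁻ z in U, ENNReal.ofReal (‖z‖ ^ (2 * t)) *
        erealExp (((-(2 * c) : ℝ) : EReal) * φ z) ∂volume) < ⊤

/-- The weighted log canonical threshold
`c_t(φ) = sup {c ≥ 0 : ‖z‖^{2t} e^{-2cφ}` is integrable near `0}`, as an element of `[0, ∞]`. -/
def lct {n : ℕ} (t : ℝ) (φ : Cn n → EReal) : ℝ≥0∞ :=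
  ⨆ c ∈ {c : ℝ | 0 ≤ c ∧ lctIntegrable t c φ}, ENNReal.ofReal c


/-! ### Auxiliary material -/

instance Cn.borelSpace (n : ℕ) : BorelSpace (Cn n) :=
  inferInstanceAs (BorelSpace (PiLp 2 (fun _ : Fin n => ℂ)))

instance Cn.isAddHaar (n : ℕ) : (volume : Measure (Cn n)).IsAddHaarMeasure :=
  (PiLp.continuousLinearEquiv 2 ℂ (fun _ : Fin n => ℂ)).symm.isAddHaarMeasure_map
    (volume : Measure (Fin n → ℂ))

lemma erealExp_coe (x : ℝ) : erealExp (x : EReal) = ENNReal.ofReal (Real.exp x) := by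
  simp [erealExp]

lemma erealExp_top : erealExp ⊤ = ⊤ := by simp [erealExp]

/-- The key divergence lemma: `‖z‖^p` has infinite integral near `0` in `ℂ^n` whenever
`p + 2n ≤ 0`. -/
lemma key_lintegral (n : ℕ) (hn : 0 < n) (p : ℝ) (hp : p + 2 * n ≤ 0) (r : ℝ) (hr : 0 < r) :
    ∫⁻ z in ball (0 : Cn n) r \ {0}, ENNReal.ofReal (‖z‖ ^ p) = ⊤ := by
  have hp0 : p ≤ 0 := by
    have h1 : (1:ℝ) ≤ (n:ℝ) := Nat.one_le_cast.mpr hn; nlinarith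
  set d : ℕ := Module.finrank ℝ (Cn n) with hd
  have hd2 : (d : ℝ) = 2 * n := by
    have : Module.finrank ℝ (Cn n) = 2 * n := by
      rw [← Module.finrank_mul_finrank ℝ ℂ (Cn n), Complex.finrank_real_complex,
        finrank_euclideanSpace, Fintype.card_fin]
    rw [hd, this]; push_cast; ring
  have hdpos : 0 < d := by
    have : (0:ℝ) < (d:ℝ) := by rw [hd2]; positivity
    exact_mod_cast this
  rw [eq_top_iff]
  have hball : ball (0 : Cn n) (min r 1) \ {0} ⊆ ball 0 r \ {0} :=
    Set.diff_subset_diff_left (ball_subset_ball (min_le_left _ _))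
  refine le_trans ?_ (lintegral_mono_set hball)
  set s : ℝ := min r 1 with hs
  have hs0 : 0 < s := lt_min hr one_pos
  have hs1 : s ≤ 1 := min_le_right _ _
  set a : ℕ → ℝ := fun k => s * (1/2) ^ k with ha
  have ha0 : ∀ k, 0 < a k := fun k => by positivity
  have hamono : ∀ k, a (k+1) < a k := by
    intro k; simp only [ha]
    have : (1/2:ℝ)^(k+1) < (1/2)^k := by
      apply pow_lt_pow_right_of_lt_one₀ <;> norm_num
    nlinarith [this]
  have ha1 : ∀ k, a k ≤ 1 := fun k => by
    calc a k ≤ s * 1 := by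
          apply mul_le_mul_of_nonneg_left _ hs0.le
          exact pow_le_one₀ (by norm_num) (by norm_num)
      _ ≤ 1 := by simpa using hs1
  set A : ℕ → Set (Cn n) := fun k => ball 0 (a k) \ ball 0 (a (k+1)) with hA
  have hAmeas : ∀ k, MeasurableSet (A k) := fun k =>
    measurableSet_ball.diff measurableSet_ball
  have hnorm : ∀ k, ∀ z ∈ A k, a (k+1) ≤ ‖z‖ ∧ ‖z‖ < a k := by
    intro k z hz
    simp only [hA, Set.mem_diff, mem_ball, dist_zero_right, not_lt] at hz
    exact ⟨hz.2, hz.1⟩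
  have hdisj : Pairwise (Function.onFun Disjoint A) := by
    have key : ∀ k l, k < l → Disjoint (A k) (A l) := by
      intro k l hkl
      rw [Set.disjoint_left]
      intro z hzk hzl
      have h1 := (hnorm k z hzk).1
      have h2 := (hnorm l z hzl).2
      have : a l ≤ a (k+1) := by
        have : ∀ i j, i ≤ j → a j ≤ a i := by
          intro i j hij
          apply mul_le_mul_of_nonneg_left _ hs0.le
          exact pow_le_pow_of_le_one (by norm_num) (by norm_num) hij
        exact this _ _ hkl
      linarith
    intro k l hkl
    rcases lt_or_gt_of_ne hkl with h | h
    exacts [key _ _ h, (key _ _ h).symm]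
  have hsub : (⋃ k, A k) ⊆ ball (0 : Cn n) s \ {0} := by
    refine Set.iUnion_subset fun k z hz => ?_
    constructor
    · refine ball_subset_ball ?_ ((Set.diff_subset) hz)
      calc a k ≤ a 0 := by
            apply mul_le_mul_of_nonneg_left _ hs0.le
            exact pow_le_pow_of_le_one (by norm_num) (by norm_num) (Nat.zero_le k)
        _ = s := by simp [ha]
    · have := (hnorm k z hz).1
      have hzpos : 0 < ‖z‖ := lt_of_lt_of_le (ha0 (k+1)) this
      simpa using norm_pos_iff.mp hzpos
  refine le_trans ?_ (lintegral_mono_set hsub)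
  rw [lintegral_iUnion hAmeas hdisj]
  set ν := volume (ball (0:Cn n) 1) with hν
  have hν0 : ν ≠ 0 := (measure_ball_pos _ _ one_pos).ne'
  have hνtop : ν ≠ ⊤ := measure_ball_lt_top.ne
  set q : ℝ := (1/2:ℝ)^d with hq
  have hq1 : q < 1 := pow_lt_one₀ (by norm_num) (by norm_num) hdpos.ne'
  have hq0 : 0 ≤ q := by positivity
  set C : ℝ≥0∞ := ENNReal.ofReal (1 - q) * ν with hC
  have hC0 : C ≠ 0 := by
    apply mul_ne_zero _ hν0
    simp only [ne_eq, ENNReal.ofReal_eq_zero, not_le]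
    linarith
  have hfind : Module.finrank ℝ (Cn n) = d := hd.symm
  haveI : Nonempty (Fin n) := ⟨⟨0, hn⟩⟩
  haveI : Nontrivial (Cn n) := inferInstance
  have hterm : ∀ k, C ≤ ∫⁻ z in A k, ENNReal.ofReal (‖z‖ ^ p) := by
    intro k
    have hmeasA : volume (A k) = ENNReal.ofReal ((a k)^d * (1 - q)) * ν := by
      rw [hA]
      simp only
      rw [measure_diff (ball_subset_ball (hamono k).le) measurableSet_ball.nullMeasurableSet
        measure_ball_lt_top.ne,
        Measure.addHaar_ball volume _ (ha0 k).le, Measure.addHaar_ball volume _ (ha0 (k+1)).le,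
        hfind, ← hν]
      have hsucc : a (k+1) = a k * (1/2) := by rw [ha]; simp [pow_succ]; ring
      have hre : (a (k+1))^d = (a k)^d * q := by rw [hsucc, mul_pow, hq]
      rw [hre, ← ENNReal.sub_mul (fun _ _ => hνtop),
        ← ENNReal.ofReal_sub _ (mul_nonneg (pow_nonneg (ha0 k).le d) hq0), mul_one_sub]
    have hlow : ENNReal.ofReal ((a k)^p) * volume (A k) ≤
        ∫⁻ z in A k, ENNReal.ofReal (‖z‖ ^ p) := by
      rw [← setLIntegral_const]
      refine setLIntegral_mono' (hAmeas k) ?_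
      intro z hz
      obtain ⟨h1, h2⟩ := hnorm k z hz
      exact ENNReal.ofReal_le_ofReal
        (Real.rpow_le_rpow_of_nonpos (lt_of_lt_of_le (ha0 (k+1)) h1) h2.le hp0)
    refine le_trans ?_ hlow
    rw [hmeasA, ← mul_assoc, ← ENNReal.ofReal_mul (Real.rpow_nonneg (ha0 k).le p), hC]
    apply mul_le_mul_left (ENNReal.ofReal_le_ofReal ?_)
    have hrp : (a k)^p * ((a k)^d * (1-q)) = (a k) ^ (p + d) * (1 - q) := by
      rw [← mul_assoc, ← Real.rpow_natCast (a k) d, ← Real.rpow_add (ha0 k)]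
    rw [hrp]
    have : (1:ℝ) ≤ (a k) ^ (p + (d:ℝ)) :=
      Real.one_le_rpow_of_pos_of_le_one_of_nonpos (ha0 k) (ha1 k) (by rw [hd2]; linarith)
    nlinarith
  calc (⊤:ℝ≥0∞) = ∑' _ : ℕ, C := (ENNReal.tsum_const_eq_top_of_ne_zero hC0).symm
    _ ≤ _ := ENNReal.tsum_le_tsum hterm

/-- If `ν_φ(0) > 0` then `c_t(φ) ≤ (t+n)/ν_φ(0)`; in particular for every real
`c > (t+n)/ν_φ(0)` the function `‖z‖^{2t} e^{-2cφ}` is not integrable on any neighborhood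
of `0`. -/
theorem statement2 {n : ℕ} (hn : 0 < n) (Ω : Set (Cn n)) (hΩ : IsCnDomain Ω)
    (h0 : (0 : Cn n) ∈ Ω) (t : ℝ) (ht : -(n : ℝ) < t)
    (φ : Cn n → EReal) (hφ : PshOn φ Ω) (hν : 0 < lelong φ) :
    (lct t φ : EReal) ≤ ((t + n : ℝ) : EReal) / lelong φ ∧
    ∀ c : ℝ, ((t + n : ℝ) : EReal) / lelong φ < (c : EReal) → ¬ lctIntegrable t c φ := by
  have htn : (0:ℝ) < t + n := by linarith
  have part2 : ∀ c : ℝ, ((t + n : ℝ) : EReal) / lelong φ < (c : EReal) →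
      ¬ lctIntegrable t c φ := by
    intro c hc
    have hBnonneg : (0:EReal) ≤ ((t + n : ℝ) : EReal) / lelong φ :=
      EReal.div_nonneg (by exact_mod_cast htn.le) hν.le
    have hc0 : (0:ℝ) < c := by
      have : (0:EReal) < (c:EReal) := lt_of_le_of_lt hBnonneg hc
      exact_mod_cast this
    -- choose an auxiliary slope `m`
    obtain ⟨m, hm0, hmlt, hcm⟩ :
        ∃ m : ℝ, 0 < m ∧ (m : EReal) < lelong φ ∧ t + n < c * m := by
      rcases eq_or_ne (lelong φ) ⊤ with h | h
      · refine ⟨(t+n)/c + 1, by positivity, ?_, ?_⟩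
        · rw [h]; exact EReal.coe_lt_top _
        · have : c * ((t+n)/c + 1) = (t+n) + c := by field_simp
          rw [this]; linarith
      · have hbot : lelong φ ≠ ⊥ := ne_bot_of_gt hν
        set νr : ℝ := (lelong φ).toReal with hνrdef
        have hνr : (νr : EReal) = lelong φ := EReal.coe_toReal h hbot
        have hνrpos : 0 < νr := by
          have : (0:EReal) < (νr:EReal) := by rw [hνr]; exact hν
          exact_mod_cast this
        have hcr : (t+n)/νr < c := by
          have : (((t+n)/νr : ℝ) : EReal) < (c:EReal) := by
            rw [EReal.coe_div, hνr]; exact hc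
          exact_mod_cast this
        have h1 : t + n < c * νr := by
          have := (div_lt_iff₀ hνrpos).mp hcr
          linarith
        have h2 : (t+n)/c < νr := by
          rw [div_lt_iff₀ hc0]; linarith [mul_comm c νr]
        refine ⟨((t+n)/c + νr)/2, by positivity, ?_, ?_⟩
        · rw [← hνr]
          have : ((t+n)/c + νr)/2 < νr := by linarith
          exact_mod_cast this
        · have h3 : c * (((t+n)/c + νr)/2) = (c * ((t+n)/c) + c * νr)/2 := by ring
          have h4 : c * ((t+n)/c) = t + n := by field_simp
          rw [h3, h4]; linarith
    -- the eventual estimate coming from the Lelong number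
    have hmlt' : (m : EReal) <
        liminf (fun z : Cn n => φ z * (((Real.log ‖z‖)⁻¹ : ℝ) : EReal)) (𝓝[≠] (0 : Cn n)) := hmlt
    have hev : ∀ᶠ z in (𝓝[≠] (0 : Cn n)),
        (m : EReal) < φ z * (((Real.log ‖z‖)⁻¹ : ℝ) : EReal) :=
      eventually_lt_of_lt_liminf hmlt'
    obtain ⟨ε, hε, hsubε⟩ := Metric.mem_nhdsWithin_iff.mp hev
    rintro ⟨U, hU, hfin⟩
    obtain ⟨δ, hδ, hδU⟩ := Metric.mem_nhds_iff.mp hU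
    set ρ : ℝ := min δ (min ε 1) with hρdef
    have hρ : 0 < ρ := lt_min hδ (lt_min hε one_pos)
    set p : ℝ := 2*t - 2*(c*m) with hpdef
    have hp : p + 2 * n ≤ 0 := by rw [hpdef]; linarith
    have htop := key_lintegral n hn p hp ρ hρ
    have hpoint : ∀ z ∈ ball (0:Cn n) ρ \ {0},
        ENNReal.ofReal (‖z‖ ^ p) ≤
          ENNReal.ofReal (‖z‖ ^ (2 * t)) * erealExp (((-(2 * c) : ℝ) : EReal) * φ z) := by
      intro z hz
      obtain ⟨hzball, hzne⟩ := hz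
      have hzne' : z ≠ 0 := by simpa using hzne
      have hz0 : 0 < ‖z‖ := norm_pos_iff.mpr hzne'
      have hznorm : ‖z‖ < ρ := by simpa [dist_zero_right] using hzball
      have hz1 : ‖z‖ < 1 := lt_of_lt_of_le hznorm ((min_le_right _ _).trans (min_le_right _ _))
      have hzε : ‖z‖ < ε := lt_of_lt_of_le hznorm ((min_le_right _ _).trans (min_le_left _ _))
      set L : ℝ := Real.log ‖z‖ with hLdef
      have hL : L < 0 := Real.log_neg hz0 hz1
      have hm : (m : EReal) < φ z * ((L⁻¹ : ℝ) : EReal) :=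
        hsubε ⟨by simpa [dist_zero_right] using hzε, by simpa using hzne'⟩
      have hLinv : L⁻¹ < 0 := inv_neg''.mpr hL
      -- rule out `φ z = ⊤`
      have hne_top : φ z ≠ ⊤ := by
        intro htt
        rw [htt, EReal.top_mul_of_neg (by exact_mod_cast hLinv)] at hm
        exact (not_lt_bot hm)
      rcases eq_or_ne (φ z) ⊥ with hbb | hne_bot
      · -- `φ z = ⊥`: the exponential is `⊤`
        rw [hbb, EReal.coe_mul_bot_of_neg (by linarith), erealExp_top,
          ENNReal.mul_top (ENNReal.ofReal_pos.mpr (Real.rpow_pos_of_pos hz0 _)).ne']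
        exact le_top
      · -- `φ z` is a real number
        set x : ℝ := (φ z).toReal with hxdef
        have hx : (x : EReal) = φ z := EReal.coe_toReal hne_top hne_bot
        have hmx : m < x * L⁻¹ := by
          rw [← hx, ← EReal.coe_mul] at hm
          exact_mod_cast hm
        have hxle : x < m * L := by
          have : m < x / L := by rwa [div_eq_mul_inv]
          exact (lt_div_iff_of_neg hL).mp this
        rw [← hx, ← EReal.coe_mul, erealExp_coe]
        have hpe : p = 2*t + (-(2*(c*m))) := by rw [hpdef]; ring
        have hsplit : ‖z‖ ^ p = ‖z‖ ^ (2*t) * ‖z‖ ^ (-(2*(c*m))) := by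
          rw [hpe, Real.rpow_add hz0]
        rw [hsplit, ENNReal.ofReal_mul (Real.rpow_nonneg hz0.le _)]
        apply mul_le_mul_right (ENNReal.ofReal_le_ofReal ?_)
        rw [Real.rpow_def_of_pos hz0, ← hLdef]
        apply Real.exp_le_exp.mpr
        nlinarith
    have hle : (∫⁻ z in ball (0:Cn n) ρ \ {0}, ENNReal.ofReal (‖z‖ ^ p)) ≤
        ∫⁻ z in U, ENNReal.ofReal (‖z‖ ^ (2 * t)) *
          erealExp (((-(2 * c) : ℝ) : EReal) * φ z) := by
      refine le_trans
        (setLIntegral_mono' (measurableSet_ball.diff (measurableSet_singleton 0)) hpoint)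
        (lintegral_mono_set ?_)
      intro z hz
      exact hδU (ball_subset_ball (min_le_left _ _) hz.1)
    rw [htop] at hle
    exact hfin.not_ge hle
  refine ⟨?_, part2⟩
  rcases eq_or_ne (lelong φ) ⊤ with h | h
  · rw [h, EReal.div_top]
    have hzero : lct t φ ≤ 0 := by
      refine iSup₂_le fun c hc => ?_
      obtain ⟨hc0, hci⟩ := hc
      rcases lt_or_eq_of_le hc0 with hpos | hzero
      · exact absurd hci (part2 c (by rw [h, EReal.div_top]; exact_mod_cast hpos))
      · simp [← hzero]
    calc (lct t φ : EReal) ≤ ((0:ℝ≥0∞) : EReal) :=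
          EReal.coe_ennreal_le_coe_ennreal_iff.mpr hzero
      _ = 0 := EReal.coe_ennreal_zero
  · have hbot : lelong φ ≠ ⊥ := ne_bot_of_gt hν
    set νr : ℝ := (lelong φ).toReal with hνrdef
    have hνr : (νr : EReal) = lelong φ := EReal.coe_toReal h hbot
    have hνrpos : 0 < νr := by
      have : (0:EReal) < (νr:EReal) := by rw [hνr]; exact hν
      exact_mod_cast this
    have hBnn : 0 ≤ (t+n)/νr := div_nonneg htn.le hνrpos.le
    have hle : lct t φ ≤ ENNReal.ofReal ((t+n)/νr) := by
      refine iSup₂_le fun c hc => ENNReal.ofReal_le_ofReal ?_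
      obtain ⟨hc0, hci⟩ := hc
      by_contra hlt
      push_neg at hlt
      refine part2 c ?_ hci
      rw [← hνr, ← EReal.coe_div]
      exact_mod_cast hlt
    calc (lct t φ : EReal) ≤ ((ENNReal.ofReal ((t+n)/νr) : ℝ≥0∞) : EReal) :=
          EReal.coe_ennreal_le_coe_ennreal_iff.mpr hle
      _ = (((t+n)/νr : ℝ) : EReal) := by
          rw [EReal.coe_ennreal_ofReal, max_eq_left hBnn]
      _ = ((t + n : ℝ) : EReal) / lelong φ := by rw [EReal.coe_div, hνr]


end
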